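/- Let λ ≥ 0 and let x, y, z₁, z₂ : ℝ → ℝ be differentiable functions of β satisfying ż₂ = z₂ (i.e. z₂(β) = λe^β), taking values in the set U for every β (that is, 0 ≤ x(β) < 1, y(β) ≥ 0, z₁(β) ≥ 0, z₂(β) ≥ 0, z₁(β) + z₂(β) ≤ 1). Suppose that for all β: ẋ(3x + y - z₁ - z₂ - 2) + 2(ẏ - ż₁ - z₂)(1 - x) ≤ -½·u(x, y, z₁, z₂), and that x(β), y(β), z₁(β), z₂(β) all tend to 0 as β → -∞. Then for every β: x(β) ≤ (4 - 3z₁(β) - 3z₂(β))/9 + (4/9)·√(1 + 3z₁(β) + 3z₂(β)). -/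
import Mathlib


open Set

noncomputable section

/-- The quantity `u` from the dimensionless formulation of the compactness bound. -/
def u (x y z₁ z₂ : ℝ) : ℝ :=
  3 * x ^ 2 + (y - z₁ - z₂) ^ 2 - 2 * (x - y) - 2 * (z₂ * (4 * x - 3) + z₁)

lemma aux_u_nonneg (x s z₂ : ℝ) (hx0 : 0 ≤ x) (hx1 : x < 1) (hz : 0 ≤ z₂)
    (h : 16 * (1 - x) ≤ (4 - 3 * x + s) ^ 2) :
    0 ≤ 3 * x ^ 2 + s ^ 2 - 2 * x + 2 * s + 8 * z₂ * (1 - x) := by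
  obtain ⟨t, ht0, ht2⟩ : ∃ t : ℝ, 0 < t ∧ t ^ 2 = 1 - x :=
    ⟨Real.sqrt (1 - x), Real.sqrt_pos.mpr (by linarith), Real.sq_sqrt (by linarith)⟩
  have ht1 : t ≤ 1 := by nlinarith
  have h' : 16 * t ^ 2 ≤ (1 + 3 * t ^ 2 + s) ^ 2 := by
    have he : 1 + 3 * t ^ 2 + s = 4 - 3 * x + s := by linarith
    rw [he]; linarith
  have h8 : 0 ≤ 8 * z₂ * (1 - x) := mul_nonneg (by linarith) (by linarith)
  rcases le_or_gt 0 (1 + 3 * t ^ 2 + s) with hc | hc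
  · have h4 : 4 * t ≤ 1 + 3 * t ^ 2 + s := by nlinarith
    have ha : 0 ≤ 4 * t - 3 * t ^ 2 := by nlinarith
    have hb : 4 * t - 3 * t ^ 2 ≤ s + 1 := by linarith
    have hkey : (4 * t - 3 * t ^ 2) ^ 2 ≤ (s + 1) ^ 2 := pow_le_pow_left₀ ha hb 2
    nlinarith [sq_nonneg (t * (1 - t))]
  · have h4 : 1 + 3 * t ^ 2 + s ≤ -(4 * t) := by nlinarith
    have ha : 0 ≤ 4 * t + 3 * t ^ 2 := by nlinarith
    have hb : 4 * t + 3 * t ^ 2 ≤ -(s + 1) := by linarith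
    have hkey : (4 * t + 3 * t ^ 2) ^ 2 ≤ (s + 1) ^ 2 := by
      have := pow_le_pow_left₀ ha hb 2
      nlinarith [this]
    nlinarith [sq_nonneg t, sq_nonneg (t ^ 2)]

lemma aux_final (x z : ℝ) (hx0 : 0 ≤ x) (hz0 : 0 ≤ z)
    (h : (4 - 3 * x - z) ^ 2 ≤ 16 * (1 - x)) :
    x ≤ (4 - 3 * z) / 9 + (4 / 9) * Real.sqrt (1 + 3 * z) := by
  set r := Real.sqrt (1 + 3 * z) with hr
  have hr0 : 0 ≤ r := Real.sqrt_nonneg _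
  have hr2 : r ^ 2 = 1 + 3 * z := Real.sq_sqrt (by linarith)
  by_contra hcon
  push_neg at hcon
  have h1 : 0 < 9 * x - (4 - 3 * z) - 4 * r := by linarith
  have h2 : 0 < 9 * x - (4 - 3 * z) + 4 * r := by linarith
  nlinarith [mul_pos h1 h2]

theorem dimensionless_compactness_bound (lam : ℝ) (hlam : 0 ≤ lam)
    (x y z₁ z₂ : ℝ → ℝ)
    (hx : Differentiable ℝ x) (hy : Differentiable ℝ y)
    (hz₁ : Differentiable ℝ z₁) (hz₂ : Differentiable ℝ z₂)
    (hz₂' : ∀ β, deriv z₂ β = z₂ β)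
    (hz₂eq : ∀ β, z₂ β = lam * Real.exp β)
    (hU : ∀ β, 0 ≤ x β ∧ x β < 1 ∧ 0 ≤ y β ∧ 0 ≤ z₁ β ∧ 0 ≤ z₂ β ∧
      z₁ β + z₂ β ≤ 1)
    (hineq : ∀ β, deriv x β * (3 * x β + y β - z₁ β - z₂ β - 2)
        + 2 * (deriv y β - deriv z₁ β - z₂ β) * (1 - x β)
      ≤ -(1 / 2) * u (x β) (y β) (z₁ β) (z₂ β))
    (hx0 : Filter.Tendsto x Filter.atBot (nhds 0))
    (hy0 : Filter.Tendsto y Filter.atBot (nhds 0))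
    (hz₁0 : Filter.Tendsto z₁ Filter.atBot (nhds 0))
    (hz₂0 : Filter.Tendsto z₂ Filter.atBot (nhds 0)) :
    ∀ β, x β ≤ (4 - 3 * z₁ β - 3 * z₂ β) / 9
      + (4 / 9) * Real.sqrt (1 + 3 * z₁ β + 3 * z₂ β) := by
  have hDpos : ∀ β, 0 < 1 - x β := fun β => by linarith [(hU β).2.1]
  have hNpos : ∀ β, 0 < 4 - 3 * x β + y β - z₁ β - z₂ β := fun β => by
    obtain ⟨h1, h2, h3, h4, h5, h6⟩ := hU β; linarith
  set N : ℝ → ℝ := fun β => 4 - 3 * x β + y β - z₁ β - z₂ β with hNdef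
  set w : ℝ → ℝ := fun β => N β * N β / (1 - x β) with hwdef
  -- derivative of w
  have key : ∀ β, HasDerivAt w
      ((((0 - 3 * deriv x β + deriv y β - deriv z₁ β - z₂ β) * N β
          + N β * (0 - 3 * deriv x β + deriv y β - deriv z₁ β - z₂ β)) * (1 - x β)
        - N β * N β * (0 - deriv x β)) / (1 - x β) ^ 2) β := by
    intro β
    have h1 : HasDerivAt x (deriv x β) β := (hx β).hasDerivAt
    have h2 : HasDerivAt y (deriv y β) β := (hy β).hasDerivAt
    have h3 : HasDerivAt z₁ (deriv z₁ β) β := (hz₁ β).hasDerivAt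
    have h4 : HasDerivAt z₂ (z₂ β) β := hz₂' β ▸ (hz₂ β).hasDerivAt
    have hNd : HasDerivAt N (0 - 3 * deriv x β + deriv y β - deriv z₁ β - z₂ β) β :=
      ((((hasDerivAt_const β (4 : ℝ)).sub (h1.const_mul 3)).add h2).sub h3).sub h4
    have hDd : HasDerivAt (fun b => 1 - x b) (0 - deriv x β) β :=
      (hasDerivAt_const β (1 : ℝ)).sub h1
    exact (hNd.mul hNd).div hDd (ne_of_gt (hDpos β))
  have hwdiff : ∀ β, DifferentiableAt ℝ w β := fun β => (key β).differentiableAt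
  -- derivative nonpositive when w ≥ 16
  have hderiv_le : ∀ β, 16 ≤ w β → deriv w β ≤ 0 := by
    intro β h16
    rw [(key β).deriv]
    have hD := hDpos β
    have hNp := hNpos β
    obtain ⟨hu1, hu2, hu3, hu4, hu5, hu6⟩ := hU β
    have h16' : 16 * (1 - x β) ≤ (4 - 3 * x β + y β - z₁ β - z₂ β) ^ 2 := by
      have := (le_div_iff₀ hD).mp h16
      simp only [hNdef] at this
      nlinarith [this]
    have hu0 : 0 ≤ u (x β) (y β) (z₁ β) (z₂ β) := by
      have := aux_u_nonneg (x β) (y β - z₁ β - z₂ β) (z₂ β) hu1 hu2 hu5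
        (by nlinarith [h16'])
      unfold u
      nlinarith [this]
    have hL := hineq β
    apply div_nonpos_of_nonpos_of_nonneg _ (by positivity)
    have hnum : ((0 - 3 * deriv x β + deriv y β - deriv z₁ β - z₂ β) * N β
          + N β * (0 - 3 * deriv x β + deriv y β - deriv z₁ β - z₂ β)) * (1 - x β)
        - N β * N β * (0 - deriv x β)
        = N β * (deriv x β * (3 * x β + y β - z₁ β - z₂ β - 2)
            + 2 * (deriv y β - deriv z₁ β - z₂ β) * (1 - x β)) := by
      simp only [hNdef]; ring
    rw [hnum]
    apply mul_nonpos_of_nonneg_of_nonpos (le_of_lt hNp)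
    linarith
  -- limit of w at -∞
  have hwlim : Filter.Tendsto w Filter.atBot (nhds 16) := by
    have hNl : Filter.Tendsto N Filter.atBot (nhds 4) := by
      have := ((((tendsto_const_nhds (x := (4 : ℝ)) (f := Filter.atBot)).sub
        (hx0.const_mul 3)).add hy0).sub hz₁0).sub hz₂0
      simpa using this
    have hDl : Filter.Tendsto (fun β => 1 - x β) Filter.atBot (nhds 1) := by
      have := (tendsto_const_nhds (x := (1 : ℝ)) (f := Filter.atBot)).sub hx0
      simpa using this
    have h := Filter.Tendsto.div (hNl.mul hNl) hDl (one_ne_zero)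
    have h16 : (16 : ℝ) = 4 * 4 / 1 := by norm_num
    rw [h16]
    exact h
  -- main claim: w ≤ 16
  have hwle : ∀ β, w β ≤ 16 := by
    intro β₀
    by_contra hgt
    push_neg at hgt
    set c := (16 + w β₀) / 2 with hc
    have hc1 : 16 < c := by simp only [hc]; linarith
    have hc2 : c < w β₀ := by simp only [hc]; linarith
    have hev : ∀ᶠ β in Filter.atBot, w β < c := hwlim.eventually_lt_const hc1
    obtain ⟨B, hB⟩ := Filter.eventually_atBot.mp hev
    set β₁ := min B (β₀ - 1) with hβ₁def
    have hwβ₁ : w β₁ < c := hB _ (min_le_left _ _)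
    have hβ₁ : β₁ < β₀ := lt_of_le_of_lt (min_le_right _ _) (by linarith)
    set S : Set ℝ := Icc β₁ β₀ ∩ w ⁻¹' (Iic c) with hSdef
    have hwcont : ContinuousOn w (Icc β₁ β₀) := fun b _ =>
      (hwdiff b).continuousAt.continuousWithinAt
    have hScomp : IsCompact S := isCompact_Icc.inter_right
      (IsClosed.preimage (continuous_iff_continuousAt.mpr
        (fun b => (hwdiff b).continuousAt)) isClosed_Iic)
    have hSne : S.Nonempty := ⟨β₁, ⟨le_refl _, le_of_lt hβ₁⟩, le_of_lt hwβ₁⟩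
    have hSbdd : BddAbove S := ⟨β₀, fun t ht => ht.1.2⟩
    set β₂ := sSup S with hβ₂def
    have hβ₂S : β₂ ∈ S := hScomp.sSup_mem hSne
    obtain ⟨⟨hβ₂1, hβ₂0⟩, hwβ₂⟩ := hβ₂S
    have hwβ₂' : w β₂ ≤ c := hwβ₂
    have hmono : AntitoneOn w (Icc β₂ β₀) := by
      apply antitoneOn_of_deriv_nonpos (convex_Icc _ _)
      · exact fun b _ => (hwdiff b).continuousAt.continuousWithinAt
      · exact fun b hb => (hwdiff b).differentiableWithinAt
      · intro b hb
        rw [interior_Icc] at hb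
        apply hderiv_le
        by_contra hlt
        push_neg at hlt
        have hbS : b ∈ S := ⟨⟨le_trans hβ₂1 (le_of_lt hb.1), le_of_lt hb.2⟩,
          le_of_lt (lt_trans hlt hc1)⟩
        have := le_csSup hSbdd hbS
        linarith [hb.1]
    have hle : w β₀ ≤ w β₂ := hmono ⟨le_refl _, hβ₂0⟩ ⟨hβ₂0, le_refl _⟩ hβ₂0
    linarith
  -- conclusion
  intro β
  obtain ⟨hu1, hu2, hu3, hu4, hu5, hu6⟩ := hU β
  have h16 := hwle β
  have hD := hDpos β
  have h16' : (4 - 3 * x β + y β - z₁ β - z₂ β) ^ 2 ≤ 16 * (1 - x β) := by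
    have := (div_le_iff₀ hD).mp h16
    simp only [hNdef] at this
    nlinarith [this]
  have hM : (4 - 3 * x β - (z₁ β + z₂ β)) ^ 2 ≤ 16 * (1 - x β) := by nlinarith [h16']
  have := aux_final (x β) (z₁ β + z₂ β) hu1 (add_nonneg hu4 hu5) hM
  have hsq : Real.sqrt (1 + 3 * (z₁ β + z₂ β)) = Real.sqrt (1 + 3 * z₁ β + 3 * z₂ β) := by
    ring_nf
  linarith [this, hsq ▸ this]
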